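/- Fix a prime power N = p^α with p an odd prime and α even, say N = d² with d = p^{α/2}. Let n ≥ 2, let h(ω) = ω₁² + ... + ω_{n-1}², and consider E1(x) := N^{-(n-1)} Σ_{ω ∈ (Z/NZ)^{n-1}} e^{2πi(x'·ω + x_n h(ω))/N} for x = (x', x_n) ∈ (Z/NZ)^n. If x satisfies gcd(x_1,...,x_n,N) = 1, then |E1(x)| ≤ d^{-(n-1)} = N^{-(n-1)/2}. -/

import Mathlib

open Complex Finset

lemma addChar_map_sum' {A M : Type*} [AddCommMonoid A] [CommMonoid M] (ψ : AddChar A M)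
    {ι : Type*} (s : Finset ι) (f : ι → A) :
    ψ (∑ i ∈ s, f i) = ∏ i ∈ s, ψ (f i) := by
  induction s using Finset.cons_induction with
  | empty => simp
  | cons a s ha ih => simp [AddChar.map_add_eq_mul, ih]

lemma sq_abs_quad_sum' {N : ℕ} [NeZero N] (a b : ZMod N) (hb : IsUnit (2 * b)) :
    (∑ t : ZMod N, ZMod.stdAddChar (a * t + b * t ^ 2)) *
      (starRingEnd ℂ) (∑ t : ZMod N, ZMod.stdAddChar (a * t + b * t ^ 2)) = (N : ℂ) := by
  classical
  set ψ := (ZMod.stdAddChar : AddChar (ZMod N) ℂ) with hψ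
  have hR : 0 < ringChar (ZMod N) := by
    rw [ZMod.ringChar_zmod_n]; exact Nat.pos_of_ne_zero (NeZero.ne N)
  have hconj : ∀ z : ZMod N, (starRingEnd ℂ) (ψ z) = ψ (-z) := fun z => by
    rw [← AddChar.inv_apply, ← AddChar.starComp_apply hR]
  have hprim := ZMod.isPrimitive_stdAddChar N
  calc (∑ t : ZMod N, ψ (a * t + b * t ^ 2)) *
      (starRingEnd ℂ) (∑ t : ZMod N, ψ (a * t + b * t ^ 2))
      = ∑ s : ZMod N, ∑ h : ZMod N, ψ (a * h + b * h ^ 2 + (2 * b * h) * s) := by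
        rw [map_sum, mul_comm, Finset.sum_mul]
        refine Finset.sum_congr rfl fun s _ => ?_
        rw [hconj, Finset.mul_sum]
        rw [← Equiv.sum_comp (Equiv.addLeft s)
          (fun t => ψ (-(a * s + b * s ^ 2)) * ψ (a * t + b * t ^ 2))]
        refine Finset.sum_congr rfl fun h _ => ?_
        rw [← AddChar.map_add_eq_mul]
        congr 1
        simp only [Equiv.coe_addLeft]
        ring
    _ = ∑ h : ZMod N, ψ (a * h + b * h ^ 2) * ∑ s : ZMod N, ψ (s * (2 * b * h)) := by
        rw [Finset.sum_comm]
        refine Finset.sum_congr rfl fun h _ => ?_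
        rw [Finset.mul_sum]
        refine Finset.sum_congr rfl fun s _ => ?_
        rw [← AddChar.map_add_eq_mul, mul_comm s]
    _ = ∑ h : ZMod N, ψ (a * h + b * h ^ 2) *
          (if 2 * b * h = 0 then (Fintype.card (ZMod N) : ℂ) else 0) := by
        refine Finset.sum_congr rfl fun h _ => ?_
        rw [AddChar.sum_mulShift _ hprim]
        push_cast
        ring
    _ = (N : ℂ) := by
        rw [Finset.sum_eq_single 0]
        · simp [ZMod.card]
        · intro h _ hne
          have : ¬ (2 * b * h = 0) := by
            rw [hb.mul_right_eq_zero]; exact hne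
          simp [this]
        · simp

lemma abs_quad_sum' {N : ℕ} [NeZero N] (a b : ZMod N) (hb : IsUnit (2 * b)) :
    ‖∑ t : ZMod N, ZMod.stdAddChar (a * t + b * t ^ 2)‖ = Real.sqrt N := by
  have h := sq_abs_quad_sum' a b hb
  rw [Complex.mul_conj] at h
  have h2 : Complex.normSq (∑ t : ZMod N, ZMod.stdAddChar (a * t + b * t ^ 2)) = (N : ℝ) := by
    exact_mod_cast h
  rw [Complex.norm_def, h2]

lemma quad_sum_eq_zero' {p β : ℕ} (hp : p.Prime) (hβ : 0 < β) [NeZero (p ^ (2 * β))]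
    (a b : ZMod (p ^ (2 * β))) (ha : IsUnit a) (hbp : (p : ZMod (p ^ (2 * β))) ∣ b) :
    (∑ t : ZMod (p ^ (2 * β)), ZMod.stdAddChar (a * t + b * t ^ 2)) = 0 := by
  classical
  set ψ := (ZMod.stdAddChar : AddChar (ZMod (p ^ (2 * β))) ℂ) with hψ
  set M : ZMod (p ^ (2 * β)) := ((p ^ (2 * β - 1) : ℕ) : ZMod (p ^ (2 * β))) with hM
  have hpM : (p : ZMod (p ^ (2 * β))) * M = 0 := by
    have h1 : (p : ZMod (p ^ (2 * β))) * M = ((p ^ (2 * β) : ℕ) : ZMod (p ^ (2 * β))) := by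
      rw [hM]
      push_cast
      rw [← pow_succ']
      congr 1
      omega
    rw [h1, ZMod.natCast_self]
  have hbM : b * M = 0 := by
    obtain ⟨b', rfl⟩ := hbp
    rw [mul_comm (p : ZMod (p ^ (2 * β))) b', mul_assoc, hpM, mul_zero]
  have hMne : a * M ≠ 0 := by
    intro h
    rw [ha.mul_right_eq_zero] at h
    rw [hM, ZMod.natCast_eq_zero_iff] at h
    have hle := Nat.le_of_dvd (pow_pos hp.pos _) h
    rw [Nat.pow_le_pow_iff_right hp.one_lt] at hle
    omega
  have hψne : ψ (a * M) ≠ 1 := by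
    intro h
    apply hMne
    have := ZMod.injective_stdAddChar (N := p ^ (2 * β))
    apply this
    show ψ (a * M) = ψ 0
    rw [h, ψ.map_zero_eq_one]
  have key : (∑ t : ZMod (p ^ (2 * β)), ψ (a * t + b * t ^ 2))
      = ψ (a * M) * ∑ t : ZMod (p ^ (2 * β)), ψ (a * t + b * t ^ 2) := by
    conv_lhs => rw [← Equiv.sum_comp (Equiv.addRight M) (fun t => ψ (a * t + b * t ^ 2))]
    rw [Finset.mul_sum]
    refine Finset.sum_congr rfl fun t _ => ?_
    simp only [Equiv.coe_addRight]
    rw [← AddChar.map_add_eq_mul]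
    congr 1
    have expand : a * (t + M) + b * (t + M) ^ 2
        = (a * M + (a * t + b * t ^ 2)) + (b * M) * (2 * t + M) := by ring
    rw [expand, hbM, zero_mul, add_zero]
  have : (1 - ψ (a * M)) * (∑ t : ZMod (p ^ (2 * β)), ψ (a * t + b * t ^ 2)) = 0 := by
    rw [sub_mul, one_mul, ← key, sub_self]
  rcases mul_eq_zero.mp this with h | h
  · exact absurd (by linear_combination -h) hψne
  · exact h

/-- Decay of the extension of constants on the paraboloid over `ℤ/Nℤ` for
`N = p^(2β) = d²` an odd prime power which is a perfect square: if
`gcd(x₁,…,xₙ,N) = 1` then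
`|N^{-(n-1)} ∑_ω e^{2πi(x'·ω + xₙ(ω₁²+⋯+ω_{n-1}²))/N}| ≤ d^{-(n-1)} = N^{-(n-1)/2}`. -/
theorem stmt_8 (p β n : ℕ) (hp : p.Prime) (hodd : p ≠ 2) (hβ : 0 < β) (hn : 2 ≤ n)
    [NeZero (p ^ (2 * β))]
    (x' : Fin (n - 1) → ZMod (p ^ (2 * β))) (xn : ZMod (p ^ (2 * β)))
    (hx : Nat.gcd (Nat.gcd (Finset.univ.gcd fun i => (x' i).val) xn.val)
        (p ^ (2 * β)) = 1) :
    ‖(((p ^ (2 * β) : ℕ) : ℂ) ^ (n - 1))⁻¹ *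
        ∑ ω : Fin (n - 1) → ZMod (p ^ (2 * β)),
          Complex.exp (2 * Real.pi * Complex.I *
            (((∑ i, (x' i).val * (ω i).val) + xn.val * ∑ i, (ω i).val ^ 2 : ℕ) : ℂ) /
              ((p ^ (2 * β) : ℕ) : ℂ))‖
      ≤ (((p : ℝ) ^ β)⁻¹) ^ (n - 1) := by
  classical
  set ψ := (ZMod.stdAddChar : AddChar (ZMod (p ^ (2 * β))) ℂ) with hψ
  -- step 1 : rewrite each exponential as a character value
  have hexp : ∀ m : ℕ, Complex.exp (2 * Real.pi * Complex.I * (m : ℂ) /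
      ((p ^ (2 * β) : ℕ) : ℂ)) = ψ ((m : ZMod (p ^ (2 * β)))) := by
    intro m
    have : ((m : ZMod (p ^ (2 * β)))) = (((m : ℤ)) : ZMod (p ^ (2 * β))) := by push_cast; ring
    rw [this, hψ, ZMod.stdAddChar_coe]
    push_cast
    ring_nf
  -- step 2 : the sum factors as a product
  have hsum : (∑ ω : Fin (n - 1) → ZMod (p ^ (2 * β)),
        Complex.exp (2 * Real.pi * Complex.I *
          (((∑ i, (x' i).val * (ω i).val) + xn.val * ∑ i, (ω i).val ^ 2 : ℕ) : ℂ) /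
            ((p ^ (2 * β) : ℕ) : ℂ)))
      = ∏ i : Fin (n - 1), ∑ t : ZMod (p ^ (2 * β)), ψ (x' i * t + xn * t ^ 2) := by
    rw [Finset.prod_univ_sum, Fintype.piFinset_univ]
    refine Finset.sum_congr rfl fun ω _ => ?_
    rw [hexp]
    have hcast : ((((∑ i, (x' i).val * (ω i).val) + xn.val * ∑ i, (ω i).val ^ 2 : ℕ)) :
        ZMod (p ^ (2 * β))) = ∑ i, (x' i * ω i + xn * (ω i) ^ 2) := by
      push_cast [ZMod.natCast_val, ZMod.cast_id]
      rw [Finset.mul_sum, ← Finset.sum_add_distrib]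
    rw [hcast, addChar_map_sum']
  rw [hsum, norm_mul, norm_inv, norm_pow, Complex.norm_natCast, norm_prod]
  -- case split on whether p divides xn.val
  by_cases hdvd : p ∣ xn.val
  · -- some coordinate of x' is a unit, and its factor vanishes
    have hex : ∃ i, ¬ p ∣ (x' i).val := by
      by_contra hco
      push_neg at hco
      have h1 : p ∣ Finset.univ.gcd (fun i => (x' i).val) :=
        Finset.dvd_gcd fun i _ => hco i
      have h2 : p ∣ Nat.gcd (Nat.gcd (Finset.univ.gcd fun i => (x' i).val) xn.val)
          (p ^ (2 * β)) :=
        Nat.dvd_gcd (Nat.dvd_gcd h1 hdvd) (dvd_pow_self p (by omega))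
      rw [hx] at h2
      exact hp.one_lt.ne' (Nat.dvd_one.mp h2)
    obtain ⟨i0, hi0⟩ := hex
    have ha : IsUnit (x' i0) := by
      rw [← ZMod.natCast_zmod_val (x' i0)]
      exact (ZMod.isUnit_iff_coprime _ _).mpr
        (((Nat.Prime.coprime_iff_not_dvd hp).mpr hi0).symm.pow_right _)
    have hbp : (p : ZMod (p ^ (2 * β))) ∣ xn := by
      obtain ⟨k, hk⟩ := hdvd
      refine ⟨(k : ZMod (p ^ (2 * β))), ?_⟩
      rw [← ZMod.natCast_zmod_val xn, hk]
      push_cast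
      ring
    have hzero : (∑ t : ZMod (p ^ (2 * β)), ψ (x' i0 * t + xn * t ^ 2)) = 0 :=
      quad_sum_eq_zero' hp hβ _ _ ha hbp
    rw [Finset.prod_eq_zero (Finset.mem_univ i0) (by rw [hzero, norm_zero])]
    rw [mul_zero]
    have hppos : (0 : ℝ) < (p : ℝ) := by exact_mod_cast hp.pos
    positivity
  · -- xn is a unit : every factor has modulus p^β
    have hxnu : IsUnit xn := by
      rw [← ZMod.natCast_zmod_val xn]
      exact (ZMod.isUnit_iff_coprime _ _).mpr
        (((Nat.Prime.coprime_iff_not_dvd hp).mpr hdvd).symm.pow_right _)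
    have h2u : IsUnit (2 : ZMod (p ^ (2 * β))) := by
      have : IsUnit ((2 : ℕ) : ZMod (p ^ (2 * β))) :=
        (ZMod.isUnit_iff_coprime _ _).mpr
          (((Nat.coprime_primes Nat.prime_two hp).mpr (Ne.symm hodd)).pow_right _)
      simpa using this
    have hb : IsUnit (2 * xn) := h2u.mul hxnu
    have habs : ∀ i : Fin (n - 1),
        ‖∑ t : ZMod (p ^ (2 * β)), ψ (x' i * t + xn * t ^ 2)‖
          = (p : ℝ) ^ β := by
      intro i
      rw [abs_quad_sum' (x' i) xn hb]
      have : ((p ^ (2 * β) : ℕ) : ℝ) = ((p : ℝ) ^ β) ^ 2 := by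
        push_cast
        rw [← pow_mul]
        ring_nf
      rw [this, Real.sqrt_sq (by positivity)]
    rw [Finset.prod_congr rfl fun i _ => habs i, Finset.prod_const, Finset.card_univ,
      Fintype.card_fin]
    apply le_of_eq
    have hppos : (0 : ℝ) < (p : ℝ) := by exact_mod_cast hp.pos
    have hP : (0 : ℝ) < (p : ℝ) ^ β := by positivity
    have hcast : ((p ^ (2 * β) : ℕ) : ℝ) = ((p : ℝ) ^ β) ^ 2 := by
      push_cast
      rw [← pow_mul]
      ring_nf
    have hsplit : (((p : ℝ) ^ β) ^ 2) ^ (n - 1)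
        = ((p : ℝ) ^ β) ^ (n - 1) * ((p : ℝ) ^ β) ^ (n - 1) := by
      rw [← pow_mul, two_mul, pow_add]
    rw [hcast, hsplit, mul_inv, mul_assoc,
      inv_mul_cancel₀ (pow_ne_zero _ hP.ne'), mul_one, inv_pow]
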